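/- arXiv:2412.06990 — 3 statements merged into one kernel-verified Lean document; each statement's English description precedes it below -/
import Mathlib

section
/- For any integer T > 1 and any real δ with 0 < δ ≤ 1/√T, for every vector x ∈ ℝ^T it holds that δ·x₁ - sqrt( Σ_{j=1}^{T-1} (x_{j+1} - x_j)² + x_T² ) ≤ 0. -/
lemma tele_aux (x : ℕ → ℝ) : ∀ n : ℕ,
    ∑ j ∈ Finset.Icc 1 n, (x (j + 1) - x j) = x (n + 1) - x 1
  | 0 => by simp
  | n + 1 => by
    rw [Finset.sum_Icc_succ_top (Nat.succ_le_succ (Nat.zero_le n)), tele_aux x n]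
    ring

theorem stmt_0 (T : ℕ) (hT : 1 < T) (δ : ℝ) (hδ0 : 0 < δ)
    (hδ : δ ≤ 1 / Real.sqrt T) (x : ℕ → ℝ) :
    δ * x 1 - Real.sqrt ((∑ j ∈ Finset.Icc 1 (T - 1), (x (j + 1) - x j) ^ 2) + x T ^ 2) ≤ 0 := by
  set S : ℝ := (∑ j ∈ Finset.Icc 1 (T - 1), (x (j + 1) - x j) ^ 2) + x T ^ 2 with hSdef
  have hS0 : 0 ≤ S := by positivity
  have hsqrt0 : 0 ≤ Real.sqrt S := Real.sqrt_nonneg _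
  rcases le_or_gt (x 1) 0 with hx1 | hx1
  · nlinarith [mul_nonpos_of_nonneg_of_nonpos hδ0.le hx1]
  · -- x 1 > 0
    have hT1 : T - 1 + 1 = T := by omega
    set g : ℕ → ℝ := fun j => if j = T then |x T| else |x (j + 1) - x j| with hg
    have hsum : ∑ j ∈ Finset.Icc 1 T, g j
        = (∑ j ∈ Finset.Icc 1 (T - 1), |x (j + 1) - x j|) + |x T| := by
      rw [← hT1, Finset.sum_Icc_succ_top (Nat.succ_le_succ (Nat.zero_le _)), hT1]
      have : ∀ j ∈ Finset.Icc 1 (T - 1), g j = |x (j + 1) - x j| := by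
        intro j hj
        simp only [Finset.mem_Icc] at hj
        simp only [hg, if_neg (by omega : j ≠ T)]
      rw [Finset.sum_congr rfl this]
      simp [hg]
    have hsumsq : ∑ j ∈ Finset.Icc 1 T, g j ^ 2 = S := by
      rw [← hT1, Finset.sum_Icc_succ_top (Nat.succ_le_succ (Nat.zero_le _)), hT1]
      have : ∀ j ∈ Finset.Icc 1 (T - 1), g j ^ 2 = (x (j + 1) - x j) ^ 2 := by
        intro j hj
        simp only [Finset.mem_Icc] at hj
        simp only [hg, if_neg (by omega : j ≠ T), sq_abs]
      rw [Finset.sum_congr rfl this]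
      simp [hg, sq_abs, hSdef]
    have hcauchy := sq_sum_le_card_mul_sum_sq (s := Finset.Icc 1 T) (f := g)
    rw [hsumsq, Nat.card_Icc] at hcauchy
    have hcard : ((T + 1 - 1 : ℕ) : ℝ) = (T : ℝ) := by norm_num
    rw [hcard] at hcauchy
    -- bound x 1
    have htel : x 1 = x T - ∑ j ∈ Finset.Icc 1 (T - 1), (x (j + 1) - x j) := by
      have := tele_aux x (T - 1)
      rw [hT1] at this
      linarith
    have hx1le : x 1 ≤ ∑ j ∈ Finset.Icc 1 T, g j := by
      rw [hsum, htel]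
      have h1 : x T ≤ |x T| := le_abs_self _
      have h2 : -(∑ j ∈ Finset.Icc 1 (T - 1), (x (j + 1) - x j))
          ≤ ∑ j ∈ Finset.Icc 1 (T - 1), |x (j + 1) - x j| := by
        rw [← Finset.sum_neg_distrib]
        exact Finset.sum_le_sum fun j _ => neg_le_abs _
      linarith
    have hgnn : 0 ≤ ∑ j ∈ Finset.Icc 1 T, g j := le_trans hx1.le hx1le
    have hsum_le : ∑ j ∈ Finset.Icc 1 T, g j ≤ Real.sqrt T * Real.sqrt S := by
      rw [← Real.sqrt_mul (by positivity)]
      have := Real.sqrt_le_sqrt hcauchy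
      rwa [Real.sqrt_sq hgnn] at this
    have hTpos : (0:ℝ) < Real.sqrt T := Real.sqrt_pos.mpr (by positivity)
    have : δ * x 1 ≤ (1 / Real.sqrt T) * (Real.sqrt T * Real.sqrt S) := by
      have h1 : δ * x 1 ≤ δ * (Real.sqrt T * Real.sqrt S) :=
        mul_le_mul_of_nonneg_left (le_trans hx1le hsum_le) hδ0.le
      have h2 : δ * (Real.sqrt T * Real.sqrt S)
          ≤ (1 / Real.sqrt T) * (Real.sqrt T * Real.sqrt S) :=
        mul_le_mul_of_nonneg_right hδ (by positivity)
      linarith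
    have heq : (1 / Real.sqrt T) * (Real.sqrt T * Real.sqrt S) = Real.sqrt S := by
      field_simp
    linarith [heq ▸ this]
end

section
/- Let T > 1 and 0 < δ ≤ 1/√T. Define the symmetric T×T tridiagonal matrix M with M₁₁ = 1, M_{jj} = 2 for 2 ≤ j ≤ T, M_{j,j+1} = M_{j+1,j} = -1, and all other entries 0. Then the matrix M - δ²·e₁e₁ᵀ is positive semidefinite, where e₁ is the first standard basis vector. -/
noncomputable def mEnt (i j : ℕ) : ℝ :=
  if i = j then (if i = 0 then 1 else 2)
  else if i + 1 = j ∨ j + 1 = i then -1 else 0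

lemma quad_form_eq (g : ℕ → ℝ) :
    ∀ T : ℕ, 1 ≤ T →
      ∑ i ∈ Finset.range T, ∑ j ∈ Finset.range T, g i * mEnt i j * g j
        = ∑ n ∈ Finset.range (T - 1), (g n - g (n + 1)) ^ 2 + g (T - 1) ^ 2 := by
  intro T hT
  induction T, hT using Nat.le_induction with
  | base => simp [mEnt]; ring
  | succ T hT ih =>
    have hpred : (T - 1) + 1 = T := Nat.succ_pred_eq_of_pos hT
    have hrow : ∑ j ∈ Finset.range (T + 1), g T * mEnt T j * g j
        = - (g T * g (T - 1)) + 2 * g T ^ 2 := by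
      rw [Finset.sum_range_succ]
      have h1 : ∑ j ∈ Finset.range T, g T * mEnt T j * g j = - (g T * g (T - 1)) := by
        rw [Finset.sum_eq_single (T - 1)]
        · have hne : T ≠ T - 1 := by omega
          simp [mEnt, hne, hpred]
        · intro j hj hjne
          have hjT : j < T := Finset.mem_range.mp hj
          have h1 : T ≠ j := by omega
          have h2 : ¬ (T + 1 = j ∨ j + 1 = T) := by omega
          simp [mEnt, h1, h2]
        · intro h
          exact absurd (Finset.mem_range.mpr (by omega)) h
      rw [h1]
      have hT0 : T ≠ 0 := by omega
      simp [mEnt, hT0]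
      ring
    have hcol : ∑ i ∈ Finset.range T, g i * mEnt i T * g T = - (g (T - 1) * g T) := by
      rw [Finset.sum_eq_single (T - 1)]
      · have hne : T - 1 ≠ T := by omega
        simp [mEnt, hne, hpred]
      · intro i hi hine
        have hiT : i < T := Finset.mem_range.mp hi
        have h1 : i ≠ T := by omega
        have h2 : ¬ (i + 1 = T ∨ T + 1 = i) := by omega
        simp [mEnt, h1, h2]
      · intro h
        exact absurd (Finset.mem_range.mpr (by omega)) h
    have hinner : ∀ i ∈ Finset.range T,
        ∑ j ∈ Finset.range (T + 1), g i * mEnt i j * g j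
          = (∑ j ∈ Finset.range T, g i * mEnt i j * g j) + g i * mEnt i T * g T :=
      fun i _ => Finset.sum_range_succ _ _
    rw [Finset.sum_range_succ, Finset.sum_congr rfl hinner, Finset.sum_add_distrib, hcol, hrow, ih]
    have hsplit : ∑ n ∈ Finset.range (T + 1 - 1), (g n - g (n + 1)) ^ 2
        = ∑ n ∈ Finset.range (T - 1), (g n - g (n + 1)) ^ 2 + (g (T - 1) - g T) ^ 2 := by
      have : T + 1 - 1 = (T - 1) + 1 := by omega
      rw [this, Finset.sum_range_succ, hpred]
    rw [hsplit]
    have : T + 1 - 1 = T := by omega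
    rw [this]
    ring

theorem stmt_1 (T : ℕ) (hT : 1 < T) (δ : ℝ) (hδ0 : 0 < δ) (hδ : δ ≤ 1 / Real.sqrt T)
    (M E : Matrix (Fin T) (Fin T) ℝ)
    (hM : ∀ i j : Fin T, M i j =
      if i = j then (if (i : ℕ) = 0 then 1 else 2)
      else if (i : ℕ) + 1 = (j : ℕ) ∨ (j : ℕ) + 1 = (i : ℕ) then -1 else 0)
    (hE : ∀ i j : Fin T, E i j = if (i : ℕ) = 0 ∧ (j : ℕ) = 0 then 1 else 0) :
    (M - δ ^ 2 • E).PosSemidef := by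
  have hTpos : 0 < T := by omega
  rw [Matrix.posSemidef_iff_dotProduct_mulVec]
  constructor
  · -- Hermitian
    ext i j
    simp only [Matrix.conjTranspose_apply, Matrix.sub_apply, Matrix.smul_apply, star_trivial,
      smul_eq_mul]
    rw [hM, hM, hE, hE]
    have h1 : (i = j) ↔ (j = i) := eq_comm
    have h2 : ((i : ℕ) + 1 = (j : ℕ) ∨ (j : ℕ) + 1 = (i : ℕ)) ↔
        ((j : ℕ) + 1 = (i : ℕ) ∨ (i : ℕ) + 1 = (j : ℕ)) := or_comm
    have h3 : ((i : ℕ) = 0 ∧ (j : ℕ) = 0) ↔ ((j : ℕ) = 0 ∧ (i : ℕ) = 0) := and_comm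
    by_cases hij : i = j
    · subst hij; ring_nf
    · simp only [hij, Ne.symm hij, if_false]
      rw [if_congr h2 rfl rfl, if_congr h3 rfl rfl]
  · intro x
    classical
    set g : ℕ → ℝ := fun n => if h : n < T then x ⟨n, h⟩ else 0 with hg
    have hgx : ∀ i : Fin T, g (i : ℕ) = x i := by
      intro i; simp [hg, i.isLt]
    -- quadratic form as double sum
    have hdot : dotProduct (star x) ((M - δ ^ 2 • E).mulVec x)
        = (∑ i ∈ Finset.range T, ∑ j ∈ Finset.range T, g i * mEnt i j * g j)
          - δ ^ 2 * g 0 ^ 2 := by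
      have expand : dotProduct (star x) ((M - δ ^ 2 • E).mulVec x)
          = ∑ i : Fin T, ∑ j : Fin T, (x i * M i j * x j - δ ^ 2 * (x i * E i j * x j)) := by
        simp only [dotProduct, Matrix.mulVec, star_trivial, Matrix.sub_apply,
          Matrix.smul_apply, smul_eq_mul, dotProduct, Finset.mul_sum]
        congr 1; ext i; congr 1; ext j; ring
      rw [expand]
      have hsplit : ∑ i : Fin T, ∑ j : Fin T, (x i * M i j * x j - δ ^ 2 * (x i * E i j * x j))
          = (∑ i : Fin T, ∑ j : Fin T, x i * M i j * x j)
            - δ ^ 2 * ∑ i : Fin T, ∑ j : Fin T, x i * E i j * x j := by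
        rw [Finset.mul_sum, ← Finset.sum_sub_distrib]
        congr 1; ext i
        rw [Finset.mul_sum, ← Finset.sum_sub_distrib]
      rw [hsplit]
      have hMsum : ∑ i : Fin T, ∑ j : Fin T, x i * M i j * x j
          = ∑ i ∈ Finset.range T, ∑ j ∈ Finset.range T, g i * mEnt i j * g j := by
        rw [← Fin.sum_univ_eq_sum_range (fun i => ∑ j ∈ Finset.range T, g i * mEnt i j * g j)]
        congr 1; ext i
        rw [← Fin.sum_univ_eq_sum_range (fun j => g i * mEnt i j * g j)]
        congr 1; ext j
        rw [hM, hgx, hgx]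
        have : mEnt (i : ℕ) (j : ℕ) = if i = j then (if (i : ℕ) = 0 then (1:ℝ) else 2)
            else if (i : ℕ) + 1 = (j : ℕ) ∨ (j : ℕ) + 1 = (i : ℕ) then -1 else 0 := by
          simp only [mEnt]
          exact if_congr (Fin.val_eq_val i j) rfl rfl
        rw [this]
      have hEsum : ∑ i : Fin T, ∑ j : Fin T, x i * E i j * x j = g 0 ^ 2 := by
        have h0 : g 0 = x ⟨0, hTpos⟩ := by simp [hg, hTpos]
        rw [h0]
        rw [Finset.sum_eq_single (⟨0, hTpos⟩ : Fin T)]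
        · rw [Finset.sum_eq_single (⟨0, hTpos⟩ : Fin T)]
          · rw [hE, if_pos ⟨rfl, rfl⟩]; ring
          · intro j _ hj
            have : ¬ ((((⟨0, hTpos⟩ : Fin T)) : ℕ) = 0 ∧ (j : ℕ) = 0) := by
              simp only [not_and]
              intro _ hj0
              exact hj (Fin.ext (by simpa using hj0))
            rw [hE, if_neg this]; ring
          · intro h; exact absurd (Finset.mem_univ _) h
        · intro i _ hi
          apply Finset.sum_eq_zero
          intro j _
          have : ¬ ((i : ℕ) = 0 ∧ (j : ℕ) = 0) := by
            simp only [not_and]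
            intro hi0 _
            exact hi (Fin.ext (by simpa using hi0))
          rw [hE, if_neg this]; ring
        · intro h; exact absurd (Finset.mem_univ _) h
      rw [hMsum, hEsum]
    rw [hdot, quad_form_eq g T (by omega)]
    -- now Cauchy-Schwarz
    set a : ℕ → ℝ := fun n => if n = T - 1 then g (T - 1) else g n - g (n + 1) with ha
    have hpred : (T - 1) + 1 = T := by omega
    have hsum_a : ∑ n ∈ Finset.range T, a n = g 0 := by
      rw [← hpred, Finset.sum_range_succ]
      have : ∑ n ∈ Finset.range (T - 1), a n
          = ∑ n ∈ Finset.range (T - 1), (g n - g (n + 1)) := by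
        apply Finset.sum_congr rfl
        intro n hn
        have : n ≠ T - 1 := by have := Finset.mem_range.mp hn; omega
        simp [ha, this]
      rw [this, Finset.sum_range_sub' g]
      simp [ha]
    have hsum_a2 : ∑ n ∈ Finset.range T, a n ^ 2
        = ∑ n ∈ Finset.range (T - 1), (g n - g (n + 1)) ^ 2 + g (T - 1) ^ 2 := by
      rw [← hpred, Finset.sum_range_succ]
      congr 1
      · apply Finset.sum_congr rfl
        intro n hn
        have : n ≠ T - 1 := by have := Finset.mem_range.mp hn; omega
        simp [ha, this]
      · simp [ha]
    have cs : (g 0) ^ 2 ≤ (T : ℝ) * (∑ n ∈ Finset.range (T - 1), (g n - g (n + 1)) ^ 2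
        + g (T - 1) ^ 2) := by
      rw [← hsum_a, ← hsum_a2]
      have := sq_sum_le_card_mul_sum_sq (s := Finset.range T) (f := a)
      simpa using this
    have hδ2 : δ ^ 2 ≤ 1 / (T : ℝ) := by
      have hsq : δ ^ 2 ≤ (1 / Real.sqrt T) ^ 2 := by
        apply pow_le_pow_left₀ hδ0.le hδ 2
      calc δ ^ 2 ≤ (1 / Real.sqrt T) ^ 2 := hsq
        _ = 1 / (T : ℝ) := by
          rw [div_pow, one_pow, Real.sq_sqrt (by positivity)]
    have hTR : (0 : ℝ) < (T : ℝ) := by positivity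
    set Q := ∑ n ∈ Finset.range (T - 1), (g n - g (n + 1)) ^ 2 + g (T - 1) ^ 2 with hQ
    have : δ ^ 2 * g 0 ^ 2 ≤ Q := by
      calc δ ^ 2 * g 0 ^ 2 ≤ (1 / (T : ℝ)) * g 0 ^ 2 := by
            apply mul_le_mul_of_nonneg_right hδ2 (sq_nonneg _)
        _ ≤ (1 / (T : ℝ)) * ((T : ℝ) * Q) := by
            apply mul_le_mul_of_nonneg_left cs (by positivity)
        _ = Q := by field_simp
    linarith
end

section
/- Let u₁,…,u_{T+1} ∈ ℝ^d be orthonormal vectors and v₀,…,v_T ∈ ℝ^n arbitrary vectors with v₀ = α·𝟙 (the all-ones vector scaled by α > 0). Define A = Σ_{j=1}^{T} (v_{j-1} - v_j)u_jᵀ + v_T u_{T+1}ᵀ. Then for w = (1/√(T+1)) Σ_{t=1}^{T+1} u_t, we have ‖w‖₂ = 1 and Aw = (α/√(T+1))·𝟙; consequently max over unit vectors w of min over p ∈ Δ^{n-1} of pᵀAw is at least α/√(T+1). -/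
open Matrix

private lemma telescope_aux (f : ℕ → ℝ) (T : ℕ) :
    ∑ j ∈ Finset.Icc 1 T, (f (j - 1) - f j) = f 0 - f T := by
  induction T with
  | zero => simp
  | succ m ih =>
    rw [Finset.sum_Icc_succ_top (by omega : 1 ≤ m + 1), ih]
    simp

theorem stmt_3 (T n d : ℕ) (hT : 1 ≤ T) (α : ℝ) (hα : 0 < α)
    (u : ℕ → Fin d → ℝ) (v : ℕ → Fin n → ℝ)
    (hortho : ∀ j ∈ Finset.Icc 1 (T + 1), ∀ k ∈ Finset.Icc 1 (T + 1),
      u j ⬝ᵥ u k = if j = k then 1 else 0)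
    (hv0 : ∀ l, v 0 l = α)
    (A : Matrix (Fin n) (Fin d) ℝ)
    (hA : ∀ l i, A l i =
      (∑ j ∈ Finset.Icc 1 T, (v (j - 1) l - v j l) * u j i) + v T l * u (T + 1) i)
    (w : Fin d → ℝ)
    (hw : ∀ i, w i = (1 / Real.sqrt (T + 1)) * ∑ t ∈ Finset.Icc 1 (T + 1), u t i) :
    Real.sqrt (∑ i, w i ^ 2) = 1 ∧
    (∀ l, A.mulVec w l = α / Real.sqrt (T + 1)) ∧
    ∃ w' : Fin d → ℝ, Real.sqrt (∑ i, w' i ^ 2) ≤ 1 ∧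
      ∀ p : Fin n → ℝ, (∀ l, 0 ≤ p l) → (∑ l, p l = 1) →
        α / Real.sqrt (T + 1) ≤ p ⬝ᵥ A.mulVec w' := by
  have hs : (0:ℝ) < Real.sqrt (T + 1) := Real.sqrt_pos.mpr (by positivity)
  have hs2 : Real.sqrt (T + 1) * Real.sqrt (T + 1) = (T + 1 : ℝ) :=
    Real.mul_self_sqrt (by positivity)
  set c : ℝ := 1 / Real.sqrt (T + 1) with hc
  set S : Finset ℕ := Finset.Icc 1 (T + 1) with hS
  have hdot : ∀ j ∈ S,
      (∑ t ∈ S, ∑ i, u j i * u t i) = 1 := by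
    intro j hj
    have h1 : ∀ t ∈ S, (∑ i, u j i * u t i) = if j = t then 1 else 0 := by
      intro t ht
      simpa [dotProduct] using hortho j hj t ht
    rw [Finset.sum_congr rfl h1]
    simp [Finset.sum_ite_eq, hj]
  have hnorm : (∑ i, w i ^ 2) = 1 := by
    have e1 : ∀ i, w i ^ 2 = c ^ 2 * ∑ j ∈ S, ∑ t ∈ S, u j i * u t i := by
      intro i
      rw [hw i, mul_pow, sq (∑ t ∈ S, u t i), Finset.sum_mul_sum]
    calc (∑ i, w i ^ 2) = ∑ i, c ^ 2 * ∑ j ∈ S, ∑ t ∈ S, u j i * u t i :=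
          Finset.sum_congr rfl fun i _ => e1 i
      _ = c ^ 2 * ∑ i, ∑ j ∈ S, ∑ t ∈ S, u j i * u t i := by rw [Finset.mul_sum]
      _ = c ^ 2 * ∑ j ∈ S, ∑ i, ∑ t ∈ S, u j i * u t i := by rw [Finset.sum_comm]
      _ = c ^ 2 * ∑ j ∈ S, ∑ t ∈ S, ∑ i, u j i * u t i := by
          congr 1
          exact Finset.sum_congr rfl fun j _ => Finset.sum_comm
      _ = c ^ 2 * ∑ j ∈ S, 1 := by
          congr 1
          exact Finset.sum_congr rfl hdot
      _ = c ^ 2 * (T + 1) := by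
          rw [Finset.sum_const]
          norm_num [hS]
      _ = 1 := by
          have hc2 : c ^ 2 = 1 / ((T:ℝ) + 1) := by
            rw [hc, div_pow, one_pow, sq, hs2]
          rw [hc2]
          field_simp
  have hudot : ∀ j ∈ S, (∑ i, u j i * w i) = c := by
    intro j hj
    calc (∑ i, u j i * w i) = ∑ i, c * ∑ t ∈ S, u j i * u t i := by
          refine Finset.sum_congr rfl fun i _ => ?_
          rw [hw i]
          calc u j i * (c * ∑ t ∈ S, u t i) = c * (u j i * ∑ t ∈ S, u t i) := by ring
            _ = c * ∑ t ∈ S, u j i * u t i := by rw [Finset.mul_sum]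
      _ = c * ∑ t ∈ S, ∑ i, u j i * u t i := by
          rw [← Finset.mul_sum, Finset.sum_comm]
      _ = c := by rw [hdot j hj, mul_one]
  have hAw : ∀ l, A.mulVec w l = α / Real.sqrt (T + 1) := by
    intro l
    have hsubset : ∀ j ∈ Finset.Icc 1 T, j ∈ S := by
      intro j hj
      simp only [hS, Finset.mem_Icc] at *
      omega
    have hT1 : (T + 1) ∈ S := by simp [hS]
    calc A.mulVec w l = ∑ i, A l i * w i := by simp [Matrix.mulVec, dotProduct]
      _ = ∑ i, ((∑ j ∈ Finset.Icc 1 T, (v (j-1) l - v j l) * (u j i * w i))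
            + v T l * (u (T+1) i * w i)) := by
            refine Finset.sum_congr rfl fun i _ => ?_
            rw [hA, add_mul, Finset.sum_mul]
            congr 1
            · exact Finset.sum_congr rfl fun j _ => by ring
            · ring
      _ = (∑ j ∈ Finset.Icc 1 T, (v (j-1) l - v j l) * ∑ i, u j i * w i)
            + v T l * ∑ i, u (T+1) i * w i := by
            rw [Finset.sum_add_distrib]
            congr 1
            · rw [Finset.sum_comm]
              exact Finset.sum_congr rfl fun j _ => by rw [Finset.mul_sum]
            · rw [Finset.mul_sum]
      _ = (∑ j ∈ Finset.Icc 1 T, (v (j-1) l - v j l) * c) + v T l * c := by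
            rw [hudot (T+1) hT1]
            congr 1
            exact Finset.sum_congr rfl fun j hj => by rw [hudot j (hsubset j hj)]
      _ = ((∑ j ∈ Finset.Icc 1 T, (v (j-1) l - v j l)) + v T l) * c := by
            rw [← Finset.sum_mul]
            ring
      _ = α / Real.sqrt (T + 1) := by
            rw [telescope_aux (fun j => v j l) T, hv0]
            simp only [hc]
            ring
  refine ⟨by rw [hnorm, Real.sqrt_one], hAw, w, by rw [hnorm, Real.sqrt_one], ?_⟩
  intro p hp hps
  have : p ⬝ᵥ A.mulVec w = ∑ l, p l * (α / Real.sqrt (T+1)) := by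
    simp only [dotProduct]
    exact Finset.sum_congr rfl fun l _ => by rw [hAw l]
  rw [this, ← Finset.sum_mul, hps, one_mul]
end
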